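/- Let G be a bridgeless cubic multigraph and e any edge of G. Then G has a perfect matching that does not contain e. -/

import Mathlib

/-- A multigraph on vertex type `V` with edge type `E`: each edge has an
unordered pair of endpoints (loops and parallel edges are allowed). -/
structure Multigraph (V : Type) (E : Type) where
  ends : E → Sym2 V

namespace Multigraph

variable {V E : Type} (G : Multigraph V E)

/-- A single step along an edge of the edge set `ES`. -/
def Step (ES : Set E) (x y : V) : Prop := ∃ e ∈ ES, G.ends e = s(x, y)

/-- `x` and `y` are joined by a walk using only edges of `ES`. -/
def LinkedOn (ES : Set E) (x y : V) : Prop := Relation.ReflTransGen (G.Step ES) x y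

/-- All edges of `ES` have both endpoints in `VS`. -/
def EdgesWithin (VS : Set V) (ES : Set E) : Prop := ∀ e ∈ ES, ∀ x ∈ G.ends e, x ∈ VS

/-- The subgraph with vertex set `VS` and edge set `ES` is connected. -/
def ConnectedOn (VS : Set V) (ES : Set E) : Prop :=
  G.EdgesWithin VS ES ∧ ∀ x ∈ VS, ∀ y ∈ VS, G.LinkedOn ES x y

/-- The degree of `v` in the edge set `ES`; a loop at `v` counts twice. -/
noncomputable def degOn (ES : Set E) (v : V) : ℕ :=
  {e ∈ ES | v ∈ G.ends e}.ncard + {e ∈ ES | G.ends e = s(v, v)}.ncard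

/-- The subgraph `(VS, ES)` is cubic: every vertex has degree exactly `3`. -/
def CubicOn (VS : Set V) (ES : Set E) : Prop :=
  G.EdgesWithin VS ES ∧ ∀ v ∈ VS, G.degOn ES v = 3

/-- `f` is a bridge of the subgraph `(VS, ES)`: removing it disconnects two
vertices of `VS` that were connected. -/
def IsBridgeOn (VS : Set V) (ES : Set E) (f : E) : Prop :=
  f ∈ ES ∧ ∃ x ∈ VS, ∃ y ∈ VS, G.LinkedOn ES x y ∧ ¬ G.LinkedOn (ES \ {f}) x y

/-- The subgraph `(VS, ES)` has no bridge. -/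
def BridgelessOn (VS : Set V) (ES : Set E) : Prop := ∀ f, ¬ G.IsBridgeOn VS ES f

/-- `M` is a perfect matching of the subgraph `(VS, ES)`: a set of non-loop
edges such that every vertex of `VS` is incident to exactly one edge of `M`. -/
def IsPerfectMatchingOn (VS : Set V) (ES : Set E) (M : Set E) : Prop :=
  M ⊆ ES ∧ (∀ e ∈ M, ¬ (G.ends e).IsDiag) ∧ ∀ v ∈ VS, ∃! e, e ∈ M ∧ v ∈ G.ends e

/-- `T` is a spanning tree of the subgraph `(VS, ES)`: it is a connected
spanning subgraph in which every edge is essential (i.e. it is acyclic). -/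
def IsSpanningTreeOn (VS : Set V) (ES : Set E) (T : Set E) : Prop :=
  T ⊆ ES ∧ G.ConnectedOn VS T ∧ ∀ f ∈ T, ¬ G.ConnectedOn VS (T \ {f})

/-- The non-tree edge `e` covers the tree edge `f` of the spanning tree `T`:
`f` lies on the path in `T` connecting the endpoints of `e`, i.e. the
endpoints of `e` get disconnected in `T` after removing `f`. -/
def Covers (T : Set E) (e f : E) : Prop :=
  f ∈ T ∧ e ∉ T ∧ ∃ x y, G.ends e = s(x, y) ∧ ¬ G.LinkedOn (T \ {f}) x y

/-- `A` is an `M`-alternating cycle: a nonempty connected set of non-loop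
edges in which every vertex incident to `A` is incident to exactly one edge
of `A ∩ M` and exactly one edge of `A \ M`. -/
def IsAlternatingCycle (M A : Set E) : Prop :=
  A.Nonempty ∧
  (∀ e ∈ A, ¬ (G.ends e).IsDiag) ∧
  (∀ v, (∃ e ∈ A, v ∈ G.ends e) →
    (∃! e, e ∈ A ∩ M ∧ v ∈ G.ends e) ∧ (∃! e, e ∈ A \ M ∧ v ∈ G.ends e)) ∧
  (∀ x y, (∃ e ∈ A, x ∈ G.ends e) → (∃ e ∈ A, y ∈ G.ends e) → G.LinkedOn A x y)


variable (F : Set E)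

/-- edges of `F` with all endpoints in `X` -/
def within (X : Set V) : Set E := {e ∈ F | ∀ x ∈ G.ends e, x ∈ X}

def comp (X : Set V) (x : V) : Set V := {y ∈ X | G.LinkedOn (G.within F X) x y}

def comps (X : Set V) : Set (Set V) := (G.comp F X) '' X

def oddComps (X : Set V) : Set (Set V) := {C ∈ G.comps F X | Odd C.ncard}

variable {G F}

lemma step_symm {ES : Set E} {x y : V} (h : G.Step ES x y) : G.Step ES y x := by
  obtain ⟨e, he, hx⟩ := h
  exact ⟨e, he, by rw [hx, Sym2.eq_swap]⟩

lemma linkedOn_symm {ES : Set E} {x y : V} (h : G.LinkedOn ES x y) : G.LinkedOn ES y x :=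
  by haveI : Std.Symm (G.Step ES) := ⟨fun _ _ => step_symm⟩; exact Std.Symm.symm (r := Relation.ReflTransGen (G.Step ES)) _ _ h

lemma linkedOn_mono {ES ES' : Set E} (hss : ES ⊆ ES') {x y : V} (h : G.LinkedOn ES x y) :
    G.LinkedOn ES' x y :=
  Relation.ReflTransGen.mono (p := G.Step ES') (fun _ _ ⟨e, he, hx⟩ => ⟨e, hss he, hx⟩) x y h

lemma within_mono {X Y : Set V} (h : X ⊆ Y) : G.within F X ⊆ G.within F Y :=
  fun e ⟨he, hx⟩ => ⟨he, fun x hx' => h (hx x hx')⟩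

lemma mem_ends_right {e : E} {x y : V} (h : G.ends e = s(x, y)) : y ∈ G.ends e := by
  rw [h]; exact Sym2.mem_mk_right x y

lemma mem_ends_left {e : E} {x y : V} (h : G.ends e = s(x, y)) : x ∈ G.ends e := by
  rw [h]; exact Sym2.mem_mk_left x y

/-- two distinct members of a Sym2 determine it -/
lemma sym2_eq {S : Sym2 V} {x y : V} (hx : x ∈ S) (hy : y ∈ S) (hxy : x ≠ y) :
    S = s(x, y) := by
  induction S using Sym2.inductionOn with
  | hf a b =>
    rw [Sym2.mem_iff] at hx hy
    rcases hx with rfl | rfl <;> rcases hy with rfl | rfl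
    · exact absurd rfl hxy
    · rfl
    · exact Sym2.eq_swap
    · exact absurd rfl hxy.symm

/-- walks confined to a closed set -/
lemma linked_confine {F1 F2 : Set E} {P : Set V}
    (hcl : ∀ e ∈ F1, (∃ x ∈ G.ends e, x ∈ P) → e ∈ F2 ∧ ∀ y ∈ G.ends e, y ∈ P)
    {x y : V} (h : G.LinkedOn F1 x y) (hx : x ∈ P) : G.LinkedOn F2 x y ∧ y ∈ P := by
  induction h with
  | refl => exact ⟨Relation.ReflTransGen.refl, hx⟩
  | tail _ hstep ih =>
    obtain ⟨hlk, hbP⟩ := ih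
    obtain ⟨e, he, hends⟩ := hstep
    obtain ⟨he2, hPs⟩ := hcl e he ⟨_, mem_ends_left hends, hbP⟩
    exact ⟨hlk.tail ⟨e, he2, hends⟩, hPs _ (mem_ends_right hends)⟩

lemma mem_comp_self {X : Set V} {x : V} (hx : x ∈ X) : x ∈ G.comp F X x :=
  ⟨hx, Relation.ReflTransGen.refl⟩

lemma comp_subset {X : Set V} {x : V} : G.comp F X x ⊆ X := fun _ h => h.1

lemma comps_nonempty {X : Set V} {C : Set V} (h : C ∈ G.comps F X) : C.Nonempty := by
  obtain ⟨x, hx, rfl⟩ := h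
  exact ⟨x, mem_comp_self hx⟩

lemma comps_subset {X : Set V} {C : Set V} (h : C ∈ G.comps F X) : C ⊆ X := by
  obtain ⟨x, hx, rfl⟩ := h; exact comp_subset

lemma comp_eq_comp {X : Set V} {x y : V} (h : G.LinkedOn (G.within F X) x y) :
    G.comp F X x = G.comp F X y := by
  ext z
  exact ⟨fun ⟨hz, hl⟩ => ⟨hz, (linkedOn_symm h).trans hl⟩, fun ⟨hz, hl⟩ => ⟨hz, h.trans hl⟩⟩

lemma comp_eq_of_mem {X : Set V} {x y : V} (h : y ∈ G.comp F X x) :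
    G.comp F X x = G.comp F X y := comp_eq_comp h.2

/-- components are disjoint or equal -/
lemma comps_eq_of_inter {X : Set V} {C C' : Set V} (hC : C ∈ G.comps F X)
    (hC' : C' ∈ G.comps F X) (h : (C ∩ C').Nonempty) : C = C' := by
  obtain ⟨x, _, rfl⟩ := hC
  obtain ⟨y, _, rfl⟩ := hC'
  obtain ⟨z, hz1, hz2⟩ := h
  rw [comp_eq_of_mem hz1, comp_eq_of_mem hz2]

/-- components are closed under edges of `within F X` -/
lemma comps_closed {X : Set V} {C : Set V} (hC : C ∈ G.comps F X) {e : E}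
    (he : e ∈ G.within F X) {a : V} (ha : a ∈ G.ends e) (haC : a ∈ C) :
    ∀ b ∈ G.ends e, b ∈ C := by
  obtain ⟨x, hx, rfl⟩ := hC
  intro b hb
  by_cases hab : a = b
  · exact hab ▸ haC
  · exact ⟨he.2 b hb, haC.2.tail ⟨e, he, sym2_eq ha hb hab⟩⟩

/-- recognizing a component: nonempty, closed, internally connected -/
lemma eq_comp_of {X : Set V} {C : Set V} {x : V} (hx : x ∈ C) (hCX : C ⊆ X)
    (hcl : ∀ e ∈ G.within F X, (∃ a ∈ G.ends e, a ∈ C) → ∀ b ∈ G.ends e, b ∈ C)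
    (hconn : ∀ y ∈ C, G.LinkedOn (G.within F X) x y) :
    C = G.comp F X x := by
  ext y
  constructor
  · intro hy; exact ⟨hCX hy, hconn y hy⟩
  · intro ⟨_, hl⟩
    exact (linked_confine (fun e he hesome => ⟨he, hcl e he hesome⟩) hl hx).2

lemma mem_comps_of {X : Set V} {C : Set V} {x : V} (hx : x ∈ C) (hCX : C ⊆ X)
    (hcl : ∀ e ∈ G.within F X, (∃ a ∈ G.ends e, a ∈ C) → ∀ b ∈ G.ends e, b ∈ C)
    (hconn : ∀ y ∈ C, G.LinkedOn (G.within F X) x y) : C ∈ G.comps F X :=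
  (eq_comp_of hx hCX hcl hconn) ▸ ⟨x, hCX hx, rfl⟩


/-- a component of a sub-ground-set that misses component `C` is a component of `X` -/
lemma comps_diff_subset {X C : Set V} (hC : C ∈ G.comps F X) :
    G.comps F (X \ C) ⊆ G.comps F X := by
  intro D hD
  obtain ⟨z, hz, rfl⟩ := hD
  refine mem_comps_of (mem_comp_self hz) ((comp_subset).trans (Set.diff_subset)) ?_ ?_
  · intro e he ⟨a, ha, haD⟩ b hb
    have heX : e ∈ G.within F (X \ C) := by
      refine ⟨he.1, fun w hw => ⟨he.2 w hw, fun hwC => ?_⟩⟩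
      have : a ∈ C := comps_closed hC he hw hwC a ha
      exact (comp_subset haD).2 this
    exact comps_closed (⟨z, hz, rfl⟩ : G.comp F (X \ C) z ∈ G.comps F (X \ C)) heX ha haD b hb
  · intro y hy
    exact linkedOn_mono (within_mono Set.diff_subset) hy.2

/-- splitting off one component -/
lemma comps_split {X : Set V} {x : V} (hx : x ∈ X) :
    G.comps F X = insert (G.comp F X x) (G.comps F (X \ G.comp F X x)) := by
  set C := G.comp F X x with hCdef
  have hC : C ∈ G.comps F X := ⟨x, hx, rfl⟩
  apply Set.Subset.antisymm
  · intro D hD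
    by_cases hDC : D = C
    · exact hDC ▸ Set.mem_insert _ _
    · have hdisj : ∀ w ∈ D, w ∉ C := by
        intro w hw hwC
        exact hDC (comps_eq_of_inter hD hC ⟨w, hw, hwC⟩)
      obtain ⟨z, hz, rfl⟩ := hD
      refine Set.mem_insert_of_mem _ (mem_comps_of (x := z) (mem_comp_self hz) ?_ ?_ ?_)
      · exact fun w hw => ⟨comp_subset hw, hdisj w hw⟩
      · intro e he ⟨a, ha, haD⟩ b hb
        exact comps_closed (⟨z, hz, rfl⟩ : _ ∈ G.comps F X) (within_mono Set.diff_subset he)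
          ha haD b hb
      · intro y hy
        have hcl : ∀ e ∈ G.within F X, (∃ a ∈ G.ends e, a ∈ G.comp F X z) →
            e ∈ G.within F (X \ C) ∧ ∀ b ∈ G.ends e, b ∈ G.comp F X z := by
          intro e he hesome
          obtain ⟨a, ha, haD⟩ := hesome
          have hall : ∀ b ∈ G.ends e, b ∈ G.comp F X z :=
            comps_closed (⟨z, hz, rfl⟩ : _ ∈ G.comps F X) he ha haD
          exact ⟨⟨he.1, fun w hw => ⟨he.2 w hw, hdisj w (hall w hw)⟩⟩, hall⟩
        exact (linked_confine hcl hy.2 (mem_comp_self hz)).1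
  · intro D hD
    rcases hD with rfl | hD
    · exact hC
    · exact comps_diff_subset hC hD

lemma comp_notmem_comps_diff {X C : Set V} (hne : C.Nonempty) :
    C ∉ G.comps F (X \ C) := by
  intro h
  obtain ⟨x, hx⟩ := hne
  exact (comps_subset h hx).2 hx

variable [Fintype V]

lemma ncard_diff_comp_lt {X : Set V} {x : V} (hx : x ∈ X) :
    (X \ G.comp F X x).ncard < X.ncard := by
  have h1 : (G.comp F X x).Nonempty := ⟨x, mem_comp_self hx⟩
  have h2 : G.comp F X x ⊆ X := comp_subset
  rw [Set.ncard_diff h2]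
  have : 0 < (G.comp F X x).ncard := (Set.ncard_pos (Set.toFinite _)).mpr h1
  have hle : (G.comp F X x).ncard ≤ X.ncard := Set.ncard_le_ncard h2
  have : 0 < X.ncard := lt_of_lt_of_le this hle
  omega

lemma qparity : ∀ (n : ℕ) (X : Set V), X.ncard ≤ n →
    (G.oddComps F X).ncard ≡ X.ncard [MOD 2] := by
  intro n
  induction n with
  | zero =>
    intro X hX
    have hX0 : X = ∅ := (Set.ncard_eq_zero (Set.toFinite _)).mp (Nat.le_zero.mp hX)
    subst hX0
    have : G.oddComps F (∅ : Set V) = ∅ := by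
      apply Set.eq_empty_of_subset_empty
      intro C hC
      obtain ⟨x, hx, _⟩ := hC.1
      exact hx
    rw [this]; simp [Set.ncard_empty, Nat.ModEq.refl]
  | succ n ih =>
    intro X hX
    rcases Set.eq_empty_or_nonempty X with rfl | ⟨x, hx⟩
    · have : G.oddComps F (∅ : Set V) = ∅ := by
        apply Set.eq_empty_of_subset_empty
        intro C hC
        obtain ⟨x, hx, _⟩ := hC.1
        exact hx
      rw [this]; simp [Set.ncard_empty, Nat.ModEq.refl]
    set C := G.comp F X x with hCdef
    have hCX : C ⊆ X := comp_subset
    have hCne : C.Nonempty := ⟨x, mem_comp_self hx⟩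
    have hlt : (X \ C).ncard < X.ncard := ncard_diff_comp_lt hx
    have hrec := ih (X \ C) (by omega)
    have hsplit := comps_split (G := G) (F := F) hx
    have hcardX : X.ncard = (X \ C).ncard + C.ncard := by
      rw [Set.ncard_diff hCX]
      have := Set.ncard_le_ncard hCX (Set.toFinite X)
      omega
    by_cases hodd : Odd C.ncard
    · have : G.oddComps F X = insert C (G.oddComps F (X \ C)) := by
        ext D
        simp only [oddComps, Set.mem_setOf_eq, Set.sep_setOf, hsplit, Set.mem_insert_iff]
        constructor
        · rintro ⟨rfl | hD, hD2⟩
          · exact Or.inl rfl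
          · exact Or.inr ⟨hD, hD2⟩
        · rintro (rfl | ⟨hD, hD2⟩)
          · exact ⟨Or.inl rfl, hodd⟩
          · exact ⟨Or.inr hD, hD2⟩
      rw [this, Set.ncard_insert_of_notMem
        (fun h => comp_notmem_comps_diff hCne h.1) (Set.toFinite _)]
      obtain ⟨k, hk⟩ := hodd
      have : (X \ C).ncard + C.ncard = ((X \ C).ncard + 1) + 2 * k := by omega
      rw [hcardX, this]
      calc (G.oddComps F (X \ C)).ncard + 1 ≡ (X \ C).ncard + 1 [MOD 2] :=
            Nat.ModEq.add_right 1 hrec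
        _ ≡ (X \ C).ncard + 1 + 2 * k [MOD 2] := by
            exact (Nat.modEq_iff_dvd' (by omega)).mpr ⟨k, by omega⟩
    · have : G.oddComps F X = G.oddComps F (X \ C) := by
        ext D
        simp only [oddComps, Set.mem_setOf_eq, Set.sep_setOf, hsplit, Set.mem_insert_iff]
        constructor
        · rintro ⟨rfl | hD, hD2⟩
          · exact absurd hD2 hodd
          · exact ⟨hD, hD2⟩
        · rintro ⟨hD, hD2⟩
          exact ⟨Or.inr hD, hD2⟩
      rw [this, hcardX]
      rw [Nat.odd_iff] at hodd
      obtain ⟨k, hk⟩ : ∃ k, C.ncard = 2 * k := ⟨C.ncard / 2, by omega⟩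
      rw [hk]
      calc (G.oddComps F (X \ C)).ncard ≡ (X \ C).ncard [MOD 2] := hrec
        _ ≡ (X \ C).ncard + 2 * k [MOD 2] :=
            (Nat.modEq_iff_dvd' (by omega)).mpr ⟨k, by omega⟩

lemma comps_mem_of_subset {X Y : Set V} (hYX : Y ⊆ X) {D : Set V}
    (hD : D ∈ G.comps F X) (hDY : D ⊆ Y) : D ∈ G.comps F Y := by
  obtain ⟨z, hz, rfl⟩ := hD
  have hcl : ∀ e ∈ G.within F X, (∃ a ∈ G.ends e, a ∈ G.comp F X z) →
      e ∈ G.within F Y ∧ ∀ b ∈ G.ends e, b ∈ G.comp F X z := by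
    intro e he ⟨a, ha, haD⟩
    have hall : ∀ b ∈ G.ends e, b ∈ G.comp F X z :=
      comps_closed (⟨z, hz, rfl⟩ : _ ∈ G.comps F X) he ha haD
    exact ⟨⟨he.1, fun w hw => hDY (hall w hw)⟩, hall⟩
  refine mem_comps_of (x := z) (mem_comp_self hz) hDY ?_ ?_
  · intro e he hs b hb
    obtain ⟨a, ha, haD⟩ := hs
    exact comps_closed (⟨z, hz, rfl⟩ : _ ∈ G.comps F X) (within_mono hYX he) ha haD b hb
  · intro y hy
    exact (linked_confine hcl hy.2 (mem_comp_self hz)).1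

lemma comps_mem_of_closed {X Y : Set V} (hYX : Y ⊆ X) {D : Set V}
    (hD : D ∈ G.comps F Y)
    (hcl : ∀ e ∈ G.within F X, (∃ a ∈ G.ends e, a ∈ D) → ∀ b ∈ G.ends e, b ∈ D) :
    D ∈ G.comps F X := by
  obtain ⟨z, hz, rfl⟩ := hD
  refine mem_comps_of (x := z) (mem_comp_self hz) (comp_subset.trans hYX) ?_ ?_
  · exact hcl
  · intro y hy
    exact linkedOn_mono (within_mono hYX) hy.2

/-- deleting a set of vertices inside one component: odd component count -/
lemma oddComps_deletion {X C₀ : Set V} (hC₀ : C₀ ∈ G.comps F X) {T' : Set V}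
    (hT' : T' ⊆ C₀) [Fintype V] :
    (G.oddComps F X \ {C₀}).ncard + (G.oddComps F (C₀ \ T')).ncard ≤
      (G.oddComps F (X \ T')).ncard := by
  classical
  set A : Set (Set V) := G.oddComps F X \ {C₀} with hA
  set B : Set (Set V) := G.oddComps F (C₀ \ T') with hB
  have hAsub : A ⊆ G.oddComps F (X \ T') := by
    rintro D ⟨⟨hD, hodd⟩, hne⟩
    have hdisj : ∀ w ∈ D, w ∉ C₀ := by
      intro w hw hwC
      exact hne (comps_eq_of_inter hD hC₀ ⟨w, hw, hwC⟩)
    refine ⟨comps_mem_of_subset Set.diff_subset hD ?_, hodd⟩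
    exact fun w hw => ⟨comps_subset hD hw, fun hwT => hdisj w hw (hT' hwT)⟩
  have hBsub : B ⊆ G.oddComps F (X \ T') := by
    rintro D ⟨hD, hodd⟩
    have hDC₀ : D ⊆ C₀ \ T' := comps_subset hD
    have hsub : C₀ \ T' ⊆ X \ T' :=
      fun w hw => ⟨comps_subset hC₀ hw.1, hw.2⟩
    refine ⟨comps_mem_of_closed hsub hD ?_, hodd⟩
    intro e he ⟨a, ha, haD⟩ b hb
    have heX : e ∈ G.within F X := within_mono Set.diff_subset he
    have hendsC₀ : ∀ w ∈ G.ends e, w ∈ C₀ :=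
      comps_closed hC₀ heX ha (hDC₀ haD).1
    have heC : e ∈ G.within F (C₀ \ T') :=
      ⟨he.1, fun w hw => ⟨hendsC₀ w hw, (he.2 w hw).2⟩⟩
    exact comps_closed hD heC ha haD b hb
  have hdisjAB : A ∩ B = ∅ := by
    apply Set.eq_empty_of_subset_empty
    rintro D ⟨⟨⟨hDX, _⟩, hne⟩, hDB⟩
    obtain ⟨w, hw⟩ := comps_nonempty hDB.1
    have hwC : w ∈ C₀ := (comps_subset hDB.1 hw).1
    exact hne (comps_eq_of_inter hDX hC₀ ⟨w, hw, hwC⟩)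
  have hunion : (A ∪ B).ncard ≤ (G.oddComps F (X \ T')).ncard :=
    Set.ncard_le_ncard (Set.union_subset hAsub hBsub) (Set.toFinite _)
  have hAB : (A ∪ B).ncard = A.ncard + B.ncard :=
    Set.ncard_union_eq (Set.disjoint_iff_inter_eq_empty.mpr hdisjAB)
      (Set.toFinite _) (Set.toFinite _)
  omega

variable (G F) in
/-- a matching of the subgraph induced on `W` (edges from `F`), covering all of `W` -/
def IsMatchingOn (W : Set V) (M : Set E) : Prop :=
  M ⊆ G.within F W ∧ (∀ e ∈ M, ¬ (G.ends e).IsDiag) ∧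
    ∀ v ∈ W, ∃! e, e ∈ M ∧ v ∈ G.ends e

theorem tutte_aux [Fintype E] : ∀ (n : ℕ) (W : Set V), W.ncard ≤ n →
    (∀ S ⊆ W, (G.oddComps F (W \ S)).ncard ≤ S.ncard) →
    ∃ M, G.IsMatchingOn F W M := by
  classical
  intro n
  induction n with
  | zero =>
    intro W hW _
    have hW0 : W = ∅ := (Set.ncard_eq_zero (Set.toFinite _)).mp (Nat.le_zero.mp hW)
    subst hW0
    exact ⟨∅, fun e he => absurd he (Set.notMem_empty e), fun e he => absurd he (Set.notMem_empty e),
      fun v hv => absurd hv (Set.notMem_empty v)⟩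
  | succ n ih =>
    intro W hWn htutte
    rcases Set.eq_empty_or_nonempty W with rfl | hWne
    · exact ⟨∅, fun e he => absurd he (Set.notMem_empty e), fun e he => absurd he (Set.notMem_empty e),
        fun v hv => absurd hv (Set.notMem_empty v)⟩
    -- choose a maximal tight set S
    set 𝒮 : Set (Set V) := {S | S ⊆ W ∧ (G.oddComps F (W \ S)).ncard = S.ncard} with h𝒮
    have hemp : (∅ : Set V) ∈ 𝒮 := by
      refine ⟨Set.empty_subset _, ?_⟩
      have h1 := htutte ∅ (Set.empty_subset _)
      simp only [Set.diff_empty, Set.ncard_empty] at h1 ⊢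
      omega
    obtain ⟨S, hS𝒮, hSmax⟩ :=
      Set.Finite.exists_maximalFor Set.ncard 𝒮 (Set.toFinite _) ⟨∅, hemp⟩
    obtain ⟨hSW, hSq⟩ := hS𝒮
    have hmaxlt : ∀ T ⊆ W, (G.oddComps F (W \ T)).ncard = T.ncard → T.ncard ≤ S.ncard := by
      intro T hTW hTq
      by_contra hlt
      push_neg at hlt
      have := hSmax ⟨hTW, hTq⟩ (le_of_lt hlt)
      omega
    -- the key consequence of maximality, via the deletion lemma
    have hkey : ∀ C ∈ G.comps F (W \ S), ∀ T' ⊆ C, T'.Nonempty →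
        (G.oddComps F (W \ S) \ {C}).ncard + (G.oddComps F (C \ T')).ncard + 1 ≤
          S.ncard + T'.ncard := by
      intro C hC T' hT'C hT'ne
      by_contra hcon
      push_neg at hcon
      have hCW : C ⊆ W \ S := comps_subset hC
      have hT'WS : T' ⊆ W \ S := hT'C.trans hCW
      set T : Set V := S ∪ T' with hT
      have hTW : T ⊆ W := Set.union_subset hSW (hT'WS.trans Set.diff_subset)
      have hWT : W \ T = (W \ S) \ T' := by rw [hT, ← Set.diff_diff]
      have hdel := oddComps_deletion (G := G) (F := F) hC hT'C
      have htut := htutte T hTW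
      rw [hWT] at htut
      have hTcard : T.ncard = S.ncard + T'.ncard := by
        rw [hT, Set.ncard_union_eq (Set.disjoint_right.mpr
          (fun a haT' haS => (hT'WS haT').2 haS)) (Set.toFinite _) (Set.toFinite _)]
      have hge : (G.oddComps F ((W \ S) \ T')).ncard ≥ T.ncard := by omega
      have heq : (G.oddComps F ((W \ S) \ T')).ncard = T.ncard := le_antisymm htut hge
      have := hmaxlt T hTW (by rw [hWT]; exact heq)
      have hT'pos : 0 < T'.ncard := (Set.ncard_pos (Set.toFinite _)).mpr hT'ne
      omega
    -- claim 1: every component of W \ S is odd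
    have hodd : ∀ C ∈ G.comps F (W \ S), Odd C.ncard := by
      intro C hC
      by_contra heven
      obtain ⟨v, hv⟩ := comps_nonempty hC
      have hnotmem : C ∉ G.oddComps F (W \ S) := fun h => heven h.2
      have hdiffeq : G.oddComps F (W \ S) \ {C} = G.oddComps F (W \ S) :=
        Set.diff_singleton_eq_self hnotmem
      have hq1 : 1 ≤ (G.oddComps F (C \ {v})).ncard := by
        have hpar := qparity (G := G) (F := F) (C \ {v}).ncard (C \ {v}) le_rfl
        have hcv : (C \ {v}).ncard = C.ncard - 1 := by
          rw [Set.ncard_diff_singleton_of_mem hv]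
        rw [Nat.odd_iff] at heven
        have hCpos : 0 < C.ncard := (Set.ncard_pos (Set.toFinite _)).mpr ⟨v, hv⟩
        have := hpar
        unfold Nat.ModEq at this
        omega
      have := hkey C hC {v} (by simpa using hv) ⟨v, rfl⟩
      rw [hdiffeq, hSq] at this
      simp only [Set.ncard_singleton] at this
      omega
    -- claim 2: each component is factor-critical (Tutte condition after deleting a vertex)
    have hfc : ∀ C ∈ G.comps F (W \ S), ∀ v ∈ C, ∀ S' ⊆ C \ {v},
        (G.oddComps F ((C \ {v}) \ S')).ncard ≤ S'.ncard := by
      intro C hC v hv S' hS'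
      by_contra hcon
      push_neg at hcon
      have hCodd : Odd C.ncard := hodd C hC
      -- parity forces a gap of two
      have hpar := qparity (G := G) (F := F) ((C \ {v}) \ S').ncard _ le_rfl
      have hc1 : (C \ {v}).ncard = C.ncard - 1 := Set.ncard_diff_singleton_of_mem hv
      have hc2 : ((C \ {v}) \ S').ncard = (C \ {v}).ncard - S'.ncard := Set.ncard_diff hS'
      have hS'le : S'.ncard ≤ (C \ {v}).ncard := Set.ncard_le_ncard hS' (Set.toFinite _)
      have hq2 : S'.ncard + 2 ≤ (G.oddComps F ((C \ {v}) \ S')).ncard := by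
        obtain ⟨m, hm⟩ := hCodd
        unfold Nat.ModEq at hpar
        omega
      set T' : Set V := insert v S' with hT'
      have hT'C : T' ⊆ C := Set.insert_subset hv (hS'.trans Set.diff_subset)
      have hCT' : C \ T' = (C \ {v}) \ S' := by
        rw [hT', ← Set.union_singleton, Set.union_comm, ← Set.diff_diff]
      have hT'card : T'.ncard = S'.ncard + 1 :=
        Set.ncard_insert_of_notMem (fun h => (hS' h).2 rfl) (Set.toFinite _)
      have hCmem : C ∈ G.oddComps F (W \ S) := ⟨hC, hCodd⟩
      have hdiffcard : (G.oddComps F (W \ S) \ {C}).ncard =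
          (G.oddComps F (W \ S)).ncard - 1 := Set.ncard_diff_singleton_of_mem hCmem
      have := hkey C hC T' hT'C ⟨v, Set.mem_insert _ _⟩
      rw [hCT'] at this
      have hqpos : 0 < (G.oddComps F (W \ S)).ncard := by
        have : C ∈ G.oddComps F (W \ S) := hCmem
        exact (Set.ncard_pos (Set.toFinite _)).mpr ⟨C, this⟩
      rw [hSq] at hdiffcard hqpos
      omega
    -- Hall's theorem setup
    set 𝒞 : Set (Set V) := G.comps F (W \ S) with h𝒞
    have hoddeq : G.oddComps F (W \ S) = 𝒞 :=
      Set.Subset.antisymm (fun C hC => hC.1) (fun C hC => ⟨hC, hodd C hC⟩)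
    have h𝒞card : 𝒞.ncard = S.ncard := by rw [← hoddeq, hSq]
    haveI : Fintype ↥𝒞 := (Set.toFinite 𝒞).fintype
    set nbr : Set V → Set V :=
      fun C => {u | u ∈ S ∧ ∃ e ∈ F, ∃ c ∈ C, G.ends e = s(c, u)} with hnbr
    set t : ↥𝒞 → Finset V := fun C => (nbr C.1).toFinset with ht
    have hhall : ∀ 𝒜 : Finset ↥𝒞, 𝒜.card ≤ (𝒜.biUnion t).card := by
      intro 𝒜
      set T₀ : Set V := ↑(𝒜.biUnion t) with hT₀
      have hT₀S : T₀ ⊆ S := by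
        intro x hx
        rw [hT₀, Finset.mem_coe, Finset.mem_biUnion] at hx
        obtain ⟨C, _, hxC⟩ := hx
        rw [ht, Set.mem_toFinset] at hxC
        exact hxC.1
      have hT₀W : T₀ ⊆ W := hT₀S.trans hSW
      have hsub : ∀ C : ↥𝒞, C ∈ 𝒜 → C.1 ∈ G.oddComps F (W \ T₀) := by
        intro C hC𝒜
        have hC : C.1 ∈ G.comps F (W \ S) := C.2
        have hYX : W \ S ⊆ W \ T₀ := fun w hw => ⟨hw.1, fun hwT => hw.2 (hT₀S hwT)⟩
        refine ⟨comps_mem_of_closed hYX hC ?_, hodd C.1 C.2⟩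
        intro e he ⟨a, ha, haC⟩ b hb
        by_cases hein : e ∈ G.within F (W \ S)
        · exact comps_closed hC hein ha haC b hb
        · exfalso
          have : ∃ w ∈ G.ends e, w ∉ W \ S := by
            by_contra hcon
            push_neg at hcon
            exact hein ⟨he.1, hcon⟩
          obtain ⟨w, hw, hwWS⟩ := this
          have hwWT : w ∈ W \ T₀ := he.2 w hw
          have hwS : w ∈ S := by
            rcases (em (w ∈ S)) with h | h
            · exact h
            · exact absurd ⟨hwWT.1, h⟩ hwWS
          have haw : a ≠ w := fun h => (comps_subset hC haC).2 (h ▸ hwS)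
          have hends : G.ends e = s(a, w) := sym2_eq ha hw haw
          have hwnbr : w ∈ nbr C.1 := ⟨hwS, e, he.1, a, haC, hends⟩
          have : w ∈ T₀ := by
            rw [hT₀, Finset.mem_coe, Finset.mem_biUnion]
            exact ⟨C, hC𝒜, by rw [ht, Set.mem_toFinset]; exact hwnbr⟩
          exact hwWT.2 this
      have himg : ↑(𝒜.image Subtype.val) ⊆ G.oddComps F (W \ T₀) := by
        intro C hC
        rw [Finset.mem_coe, Finset.mem_image] at hC
        obtain ⟨C', hC', rfl⟩ := hC
        exact hsub C' hC'
      calc 𝒜.card = (𝒜.image Subtype.val).card :=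
            (Finset.card_image_of_injective _ Subtype.val_injective).symm
        _ = (↑(𝒜.image Subtype.val) : Set (Set V)).ncard := (Set.ncard_coe_finset _).symm
        _ ≤ (G.oddComps F (W \ T₀)).ncard := Set.ncard_le_ncard himg (Set.toFinite _)
        _ ≤ T₀.ncard := htutte T₀ hT₀W
        _ = (𝒜.biUnion t).card := Set.ncard_coe_finset _
    obtain ⟨f, hfinj, hft⟩ := (Finset.all_card_le_biUnion_card_iff_exists_injective t).mp hhall
    have hfnbr : ∀ C : ↥𝒞, f C ∈ nbr C.1 := by
      intro C
      have := hft C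
      rwa [ht, Set.mem_toFinset] at this
    have hfS : ∀ C : ↥𝒞, f C ∈ S := fun C => (hfnbr C).1
    have hrange : Set.range f = S := by
      refine Set.eq_of_subset_of_ncard_le (Set.range_subset_iff.mpr hfS) ?_ (Set.toFinite _)
      have : (Set.range f).ncard = S.ncard := by
        rw [← Set.image_univ, Set.ncard_image_of_injective _ hfinj, Set.ncard_univ,
          Nat.card_coe_set_eq, h𝒞card]
      omega
    have hfedge : ∀ C : ↥𝒞, ∃ e, e ∈ F ∧ ∃ c, c ∈ C.1 ∧ G.ends e = s(c, f C) := by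
      intro C
      obtain ⟨_, e, heF, c, hc, hends⟩ := hfnbr C
      exact ⟨e, heF, c, hc, hends⟩
    choose eC heCF cC hcC hends using hfedge
    -- recursive matchings on C \ {cC C}
    have hIH : ∀ C : ↥𝒞, ∃ M, G.IsMatchingOn F (C.1 \ {cC C}) M := by
      intro C
      have hCW : C.1 ⊆ W \ S := comps_subset C.2
      have hcard : (C.1 \ {cC C}).ncard ≤ n := by
        have h1 : (C.1 \ {cC C}).ncard = C.1.ncard - 1 :=
          Set.ncard_diff_singleton_of_mem (hcC C)
        have h2 : C.1.ncard ≤ W.ncard :=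
          Set.ncard_le_ncard (hCW.trans Set.diff_subset) (Set.toFinite _)
        have h3 : 0 < C.1.ncard := (Set.ncard_pos (Set.toFinite _)).mpr ⟨cC C, hcC C⟩
        omega
      exact ih _ hcard (hfc C.1 C.2 (cC C) (hcC C))
    choose MC hMC using hIH
    -- helper facts
    have hCsub : ∀ C : ↥𝒞, C.1 ⊆ W \ S := fun C => comps_subset C.2
    have hMCends : ∀ C : ↥𝒞, ∀ g ∈ MC C, ∀ x ∈ G.ends g, x ∈ C.1 ∧ x ≠ cC C := by
      intro C g hg x hx
      have := ((hMC C).1 hg).2 x hx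
      exact ⟨this.1, this.2⟩
    have hcompeq : ∀ C C' : ↥𝒞, ∀ x, x ∈ C.1 → x ∈ C'.1 → C = C' := by
      intro C C' x hx hx'
      exact Subtype.ext (comps_eq_of_inter C.2 C'.2 ⟨x, hx, hx'⟩)
    have hcCS : ∀ C : ↥𝒞, cC C ∉ S := fun C => (hCsub C (hcC C)).2
    refine ⟨Set.range eC ∪ ⋃ C, MC C, ?_, ?_, ?_⟩
    · rintro g (⟨C, rfl⟩ | hg)
      · refine ⟨heCF C, ?_⟩
        intro x hx
        rw [hends C, Sym2.mem_iff] at hx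
        rcases hx with rfl | rfl
        · exact (hCsub C (hcC C)).1
        · exact hSW (hfS C)
      · rw [Set.mem_iUnion] at hg
        obtain ⟨C, hg⟩ := hg
        refine ⟨((hMC C).1 hg).1, fun x hx => ?_⟩
        exact ((hCsub C) (((hMC C).1 hg).2 x hx).1).1
    · rintro g (⟨C, rfl⟩ | hg)
      · rw [hends C]
        rw [Sym2.mk_isDiag_iff]
        exact fun h => hcCS C (h ▸ hfS C)
      · rw [Set.mem_iUnion] at hg
        obtain ⟨C, hg⟩ := hg
        exact (hMC C).2.1 g hg
    · intro v hvW
      by_cases hvS : v ∈ S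
      · obtain ⟨C₀, hC₀⟩ : ∃ C₀, f C₀ = v := by
          have : v ∈ Set.range f := hrange ▸ hvS
          exact this
        refine ⟨eC C₀, ⟨Or.inl ⟨C₀, rfl⟩, ?_⟩, ?_⟩
        · rw [hends C₀, ← hC₀]
          exact Sym2.mem_mk_right _ _
        · rintro g ⟨(⟨C', rfl⟩ | hg), hvg⟩
          · rw [hends C', Sym2.mem_iff] at hvg
            rcases hvg with rfl | rfl
            · exact absurd hvS (hcCS C')
            · rw [hfinj (hC₀ ▸ rfl : f C' = f C₀)]
          · exfalso
            rw [Set.mem_iUnion] at hg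
            obtain ⟨C', hg⟩ := hg
            exact (hMCends C' g hg v hvg).1 |> fun h => (hCsub C' h).2 hvS
      · have hv' : v ∈ W \ S := ⟨hvW, hvS⟩
        set C₀ : ↥𝒞 := ⟨G.comp F (W \ S) v, ⟨v, hv', rfl⟩⟩ with hC₀def
        have hvC₀ : v ∈ C₀.1 := mem_comp_self hv'
        by_cases hvc : v = cC C₀
        · refine ⟨eC C₀, ⟨Or.inl ⟨C₀, rfl⟩, ?_⟩, ?_⟩
          · rw [hends C₀, hvc]
            exact Sym2.mem_mk_left _ _
          · rintro g ⟨(⟨C', rfl⟩ | hg), hvg⟩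
            · rw [hends C', Sym2.mem_iff] at hvg
              rcases hvg with rfl | rfl
              · rw [hcompeq C' C₀ (cC C') (hcC C') (hvc ▸ hvC₀)]
              · exact absurd (hfS C') hvS
            · exfalso
              rw [Set.mem_iUnion] at hg
              obtain ⟨C', hg⟩ := hg
              have h1 := hMCends C' g hg v hvg
              have : C' = C₀ := hcompeq C' C₀ v h1.1 hvC₀
              exact h1.2 (this ▸ hvc)
        · obtain ⟨g₀, ⟨hg₀M, hg₀v⟩, huniq⟩ := (hMC C₀).2.2 v ⟨hvC₀, hvc⟩
          refine ⟨g₀, ⟨Or.inr (Set.mem_iUnion.mpr ⟨C₀, hg₀M⟩), hg₀v⟩, ?_⟩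
          rintro g ⟨(⟨C', rfl⟩ | hg), hvg⟩
          · exfalso
            rw [hends C', Sym2.mem_iff] at hvg
            rcases hvg with rfl | rfl
            · have hCC : C₀ = C' := hcompeq C₀ C' _ hvC₀ (hcC C')
              exact hvc (by rw [hCC])
            · exact hvS (hfS C')
          · rw [Set.mem_iUnion] at hg
            obtain ⟨C', hg⟩ := hg
            have h1 := hMCends C' g hg v hvg
            have hCC : C' = C₀ := hcompeq C' C₀ v h1.1 hvC₀
            exact huniq g ⟨hCC ▸ hg, hvg⟩


section CrossCounting

variable (G) in
/-- edges with exactly one endpoint in `C` -/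
def cross (C : Set V) : Set E := {f | ∃ a b, G.ends f = s(a, b) ∧ a ∈ C ∧ b ∉ C}

lemma sym2_exists (z : Sym2 V) : ∃ a b, z = s(a, b) :=
  Sym2.inductionOn z (fun a b => ⟨a, b, rfl⟩)

lemma mem_cross_iff {C : Set V} {a b : V} {f : E} (h : G.ends f = s(a, b)) :
    f ∈ G.cross C ↔ (a ∈ C ∧ b ∉ C) ∨ (b ∈ C ∧ a ∉ C) := by
  constructor
  · rintro ⟨x, y, hxy, hx, hy⟩
    rw [h, Sym2.eq_iff] at hxy
    rcases hxy with ⟨rfl, rfl⟩ | ⟨rfl, rfl⟩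
    · exact Or.inl ⟨hx, hy⟩
    · exact Or.inr ⟨hx, hy⟩
  · rintro (⟨h1, h2⟩ | ⟨h1, h2⟩)
    · exact ⟨a, b, h, h1, h2⟩
    · exact ⟨b, a, by rw [h, Sym2.eq_swap], h1, h2⟩

variable [Fintype V] [Fintype E]

lemma cross_parity (hcubic : ∀ v : V, G.degOn Set.univ v = 3) (C : Set V) :
    (G.cross C).ncard % 2 = (3 * C.ncard) % 2 := by
  classical
  set Cf := C.toFinset with hCf
  have hmemCf : ∀ v : V, v ∈ Cf ↔ v ∈ C := fun v => Set.mem_toFinset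
  have hdeg : ∀ v : V, G.degOn Set.univ v =
      (Finset.univ.filter (fun e : E => v ∈ G.ends e)).card +
      (Finset.univ.filter (fun e : E => G.ends e = s(v, v))).card := by
    intro v
    unfold degOn
    rw [Set.sep_univ, Set.sep_univ, Set.ncard_eq_toFinset_card', Set.ncard_eq_toFinset_card',
      Set.toFinset_setOf, Set.toFinset_setOf]
  have hsum : ∑ v ∈ Cf, G.degOn Set.univ v = 3 * Cf.card := by
    rw [Finset.sum_congr rfl (fun v _ => hcubic v), Finset.sum_const, smul_eq_mul, mul_comm]
  have hswap : ∑ v ∈ Cf, G.degOn Set.univ v = ∑ e : E,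
      ((Cf.filter (fun v => v ∈ G.ends e)).card +
        (Cf.filter (fun v => G.ends e = s(v, v))).card) := by
    simp_rw [hdeg, Finset.card_filter, ← Finset.sum_add_distrib]
    exact Finset.sum_comm
  have hsing : ∀ x : V, (Cf ∩ {x}).card = (if x ∈ C then 1 else 0) := by
    intro x
    split_ifs with hx
    · have : Cf ∩ {x} = {x} := by
        ext y
        simp only [Finset.mem_inter, Finset.mem_singleton, hmemCf]
        exact ⟨fun h => h.2, fun h => ⟨h ▸ hx, h⟩⟩
      rw [this, Finset.card_singleton]
    · have : Cf ∩ {x} = ∅ := by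
        ext y
        simp only [Finset.mem_inter, Finset.mem_singleton, hmemCf, Finset.notMem_empty,
          iff_false, not_and]
        rintro h rfl
        exact hx h
      rw [this, Finset.card_empty]
  have hedge : ∀ e : E,
      ((Cf.filter (fun v => v ∈ G.ends e)).card +
        (Cf.filter (fun v => G.ends e = s(v, v))).card) % 2 =
      (if e ∈ G.cross C then 1 else 0) % 2 := by
    intro e
    obtain ⟨a, b, hab⟩ := sym2_exists (G.ends e)
    by_cases hd : a = b
    · subst hd
      have h1 : Cf.filter (fun v => v ∈ G.ends e) = Cf ∩ {a} := by
        ext v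
        simp only [Finset.mem_filter, Finset.mem_inter, Finset.mem_singleton, hab, Sym2.mem_iff,
          or_self]
      have h2 : Cf.filter (fun v => G.ends e = s(v, v)) = Cf ∩ {a} := by
        ext v
        simp only [Finset.mem_filter, Finset.mem_inter, Finset.mem_singleton, hab, Sym2.eq_iff,
          and_self, or_self]
        constructor
        · rintro ⟨h, rfl⟩; exact ⟨h, rfl⟩
        · rintro ⟨h, rfl⟩; exact ⟨h, rfl⟩
      have hcr : e ∉ G.cross C := by
        rw [mem_cross_iff hab]
        rintro (⟨h1', h2'⟩ | ⟨h1', h2'⟩) <;> exact h2' h1'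
      rw [h1, h2, if_neg hcr]
      omega
    · have h2 : Cf.filter (fun v => G.ends e = s(v, v)) = ∅ := by
        rw [Finset.filter_eq_empty_iff]
        intro v _ h
        rw [hab, Sym2.eq_iff] at h
        rcases h with ⟨rfl, rfl⟩ | ⟨rfl, rfl⟩ <;> exact hd rfl
      have h1 : Cf.filter (fun v => v ∈ G.ends e) = (Cf ∩ {a}) ∪ (Cf ∩ {b}) := by
        ext v
        simp only [Finset.mem_filter, Finset.mem_union, Finset.mem_inter, Finset.mem_singleton,
          hab, Sym2.mem_iff]
        tauto
      have hdisj : Disjoint (Cf ∩ {a}) (Cf ∩ {b}) := by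
        rw [Finset.disjoint_left]
        intro y hy hy'
        rw [Finset.mem_inter, Finset.mem_singleton] at hy hy'
        exact hd (hy.2 ▸ hy'.2 ▸ rfl)
      rw [h1, h2, Finset.card_union_of_disjoint hdisj, Finset.card_empty, hsing, hsing]
      by_cases ha : a ∈ C <;> by_cases hb : b ∈ C <;>
        simp only [mem_cross_iff hab, ha, hb, if_true, if_false] <;> simp [ha, hb] <;> omega
  have hcrossfin : (G.cross C).ncard = (Finset.univ.filter (fun e : E => e ∈ G.cross C)).card := by
    rw [Set.ncard_eq_toFinset_card']
    congr 1
    ext g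
    simp [Set.mem_toFinset]
  have hCcard : Cf.card = C.ncard := (Set.ncard_eq_toFinset_card' C).symm
  calc (G.cross C).ncard % 2
      = (∑ e : E, if e ∈ G.cross C then 1 else 0) % 2 := by
        rw [hcrossfin, Finset.card_filter]
    _ = (∑ e : E, ((Cf.filter (fun v => v ∈ G.ends e)).card +
          (Cf.filter (fun v => G.ends e = s(v, v))).card)) % 2 := by
        rw [Finset.sum_nat_mod]
        conv_rhs => rw [Finset.sum_nat_mod]
        congr 1
        exact Finset.sum_congr rfl (fun e _ => (hedge e).symm)
    _ = (3 * C.ncard) % 2 := by rw [← hswap, hsum, hCcard]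

lemma cross_bridge {C : Set V} {f : E} (h : G.cross C = {f}) :
    G.IsBridgeOn Set.univ Set.univ f := by
  have hf : f ∈ G.cross C := h ▸ rfl
  obtain ⟨a, b, hab, haC, hbC⟩ := hf
  refine ⟨Set.mem_univ f, a, Set.mem_univ a, b, Set.mem_univ b,
    Relation.ReflTransGen.single ⟨f, Set.mem_univ f, hab⟩, ?_⟩
  intro hlink
  have hcl : ∀ g ∈ (Set.univ \ {f} : Set E), (∃ x ∈ G.ends g, x ∈ C) →
      g ∈ (Set.univ \ {f} : Set E) ∧ ∀ y ∈ G.ends g, y ∈ C := by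
    intro g hg ⟨x, hx, hxC⟩
    refine ⟨hg, fun y hy => ?_⟩
    by_contra hyC
    have hxy : x ≠ y := fun hh => hyC (hh ▸ hxC)
    have : g ∈ G.cross C := ⟨x, y, sym2_eq hx hy hxy, hxC, hyC⟩
    rw [h] at this
    exact hg.2 this
  exact hbC (linked_confine hcl hlink haC).2

lemma cross_ge_three (hcubic : ∀ v : V, G.degOn Set.univ v = 3)
    (hbridgeless : G.BridgelessOn Set.univ Set.univ) {C : Set V} (hodd : Odd C.ncard) :
    3 ≤ (G.cross C).ncard := by
  have hpar := cross_parity hcubic C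
  rw [Nat.odd_iff] at hodd
  have hne1 : (G.cross C).ncard ≠ 1 := by
    intro h1
    obtain ⟨f, hf⟩ := (Set.ncard_eq_one (s := G.cross C)).mp h1
    exact hbridgeless f (cross_bridge hf)
  have : (3 * C.ncard) % 2 = 1 := by omega
  omega

/-- Tutte's condition for the graph with one edge removed. -/
lemma tutte_condition_del (hcubic : ∀ v : V, G.degOn Set.univ v = 3)
    (hbridgeless : G.BridgelessOn Set.univ Set.univ) (e₀ : E) :
    ∀ S : Set V, S ⊆ Set.univ →
      (G.oddComps (Set.univ \ {e₀}) (Set.univ \ S)).ncard ≤ S.ncard := by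
  classical
  intro S _
  set F : Set E := Set.univ \ {e₀} with hF
  set X : Set V := Set.univ \ S with hX
  set 𝒪 : Set (Set V) := G.oddComps F X with h𝒪
  set 𝒪f : Finset (Set V) := 𝒪.toFinset with h𝒪f
  obtain ⟨a₀, b₀, hab₀⟩ := sym2_exists (G.ends e₀)
  -- crossing edges of a component, with e₀ removed, go to S and are at least 3 - [e₀ crosses]
  have hCfacts : ∀ C ∈ 𝒪f, (G.cross C \ {e₀} : Set E) ⊆ {g | ∃ u ∈ G.ends g, u ∈ S} ∧
      3 ≤ (G.cross C \ {e₀} : Set E).ncard + (if e₀ ∈ G.cross C then 1 else 0) := by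
    intro C hC
    rw [h𝒪f, Set.mem_toFinset] at hC
    obtain ⟨hCcomp, hCodd⟩ := hC
    have h3 := cross_ge_three hcubic hbridgeless hCodd
    constructor
    · rintro g ⟨hgcr, hgne⟩
      obtain ⟨a, b, hab, haC, hbC⟩ := hgcr
      refine ⟨b, mem_ends_right hab, ?_⟩
      by_contra hbS
      have hgF : g ∈ G.within F X := by
        refine ⟨⟨Set.mem_univ g, hgne⟩, fun x hx => ?_⟩
        rw [hab, Sym2.mem_iff] at hx
        rcases hx with rfl | rfl
        · exact comps_subset hCcomp haC
        · exact ⟨Set.mem_univ x, hbS⟩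
      exact hbC (comps_closed hCcomp hgF (mem_ends_left hab) haC b (mem_ends_right hab))
    · by_cases he₀ : e₀ ∈ G.cross C
      · have : (G.cross C \ {e₀} : Set E).ncard = (G.cross C).ncard - 1 :=
          Set.ncard_diff_singleton_of_mem he₀
        rw [if_pos he₀]
        omega
      · rw [if_neg he₀, Set.diff_singleton_eq_self he₀]
        omega
  -- at most two components are crossed by e₀
  have hcnt : ∑ C ∈ 𝒪f, (if e₀ ∈ G.cross C then 1 else 0) ≤ 2 := by
    have hsub : 𝒪f.filter (fun C => e₀ ∈ G.cross C) ⊆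
        𝒪f.filter (fun C => a₀ ∈ C) ∪ 𝒪f.filter (fun C => b₀ ∈ C) := by
      intro C hC
      rw [Finset.mem_filter] at hC
      obtain ⟨hC𝒪, hcr⟩ := hC
      rw [mem_cross_iff hab₀] at hcr
      rw [Finset.mem_union, Finset.mem_filter, Finset.mem_filter]
      rcases hcr with ⟨h1, _⟩ | ⟨h1, _⟩
      · exact Or.inl ⟨hC𝒪, h1⟩
      · exact Or.inr ⟨hC𝒪, h1⟩
    have hone : ∀ x : V, (𝒪f.filter (fun C => x ∈ C)).card ≤ 1 := by
      intro x
      rw [Finset.card_le_one]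
      intro C hC D hD
      rw [Finset.mem_filter, h𝒪f, Set.mem_toFinset] at hC hD
      exact comps_eq_of_inter hC.1.1 hD.1.1 ⟨x, hC.2, hD.2⟩
    calc ∑ C ∈ 𝒪f, (if e₀ ∈ G.cross C then 1 else 0)
        = (𝒪f.filter (fun C => e₀ ∈ G.cross C)).card := (Finset.card_filter _ _).symm
      _ ≤ (𝒪f.filter (fun C => a₀ ∈ C) ∪ 𝒪f.filter (fun C => b₀ ∈ C)).card :=
          Finset.card_le_card hsub
      _ ≤ (𝒪f.filter (fun C => a₀ ∈ C)).card + (𝒪f.filter (fun C => b₀ ∈ C)).card :=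
          Finset.card_union_le _ _
      _ ≤ 2 := by have := hone a₀; have := hone b₀; omega
  -- the residual crossing edge sets are pairwise disjoint and incident to S
  have hIS : ∑ C ∈ 𝒪f, (G.cross C \ {e₀} : Set E).ncard ≤ 3 * S.ncard := by
    have hdisj : ∀ C ∈ 𝒪f, ∀ D ∈ 𝒪f, C ≠ D →
        Disjoint ((G.cross C \ {e₀} : Set E)).toFinset ((G.cross D \ {e₀} : Set E)).toFinset := by
      intro C hC D hD hne
      rw [Finset.disjoint_left]
      intro g hg hg'
      rw [Set.mem_toFinset] at hg hg'
      obtain ⟨⟨a, b, hab, haC, hbC⟩, hgne⟩ := hg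
      obtain ⟨⟨a', b', hab', haD, hbD⟩, _⟩ := hg'
      rw [h𝒪f, Set.mem_toFinset] at hC hD
      have hbS : b ∈ S := by
        obtain ⟨h1, _⟩ := hCfacts C (by rw [h𝒪f, Set.mem_toFinset]; exact hC)
        obtain ⟨u, hu, huS⟩ := h1 ⟨⟨a, b, hab, haC, hbC⟩, hgne⟩
        rw [hab, Sym2.mem_iff] at hu
        rcases hu with rfl | rfl
        · exact absurd huS (comps_subset hC.1 haC).2
        · exact huS
      rw [hab] at hab'
      rw [Sym2.eq_iff] at hab'
      rcases hab' with ⟨rfl, rfl⟩ | ⟨rfl, rfl⟩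
      · exact hne (comps_eq_of_inter hC.1 hD.1 ⟨a, haC, haD⟩)
      · exact (comps_subset hD.1 haD).2 hbS
    have hsubIS : ∀ C ∈ 𝒪f, ((G.cross C \ {e₀} : Set E)).toFinset ⊆
        ({g | ∃ u ∈ G.ends g, u ∈ S} : Set E).toFinset := by
      intro C hC
      intro g hg
      rw [Set.mem_toFinset] at hg ⊢
      exact (hCfacts C hC).1 hg
    calc ∑ C ∈ 𝒪f, (G.cross C \ {e₀} : Set E).ncard
        = ∑ C ∈ 𝒪f, ((G.cross C \ {e₀} : Set E)).toFinset.card :=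
          Finset.sum_congr rfl (fun C _ => Set.ncard_eq_toFinset_card' _)
      _ = (𝒪f.biUnion (fun C => ((G.cross C \ {e₀} : Set E)).toFinset)).card :=
          (Finset.card_biUnion hdisj).symm
      _ ≤ (({g | ∃ u ∈ G.ends g, u ∈ S} : Set E)).toFinset.card := by
          apply Finset.card_le_card
          intro g hg
          rw [Finset.mem_biUnion] at hg
          obtain ⟨C, hC, hg⟩ := hg
          exact hsubIS C hC hg
      _ ≤ 3 * S.ncard := by
          have hsub2 : (({g | ∃ u ∈ G.ends g, u ∈ S} : Set E)).toFinset ⊆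
              S.toFinset.biUnion (fun u => ({g | u ∈ G.ends g} : Set E).toFinset) := by
            intro g hg
            rw [Set.mem_toFinset] at hg
            obtain ⟨u, hu, huS⟩ := hg
            rw [Finset.mem_biUnion]
            exact ⟨u, Set.mem_toFinset.mpr huS, Set.mem_toFinset.mpr hu⟩
          calc (({g | ∃ u ∈ G.ends g, u ∈ S} : Set E)).toFinset.card
              ≤ (S.toFinset.biUnion (fun u => ({g | u ∈ G.ends g} : Set E).toFinset)).card :=
                Finset.card_le_card hsub2
            _ ≤ ∑ u ∈ S.toFinset, ({g | u ∈ G.ends g} : Set E).toFinset.card :=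
                Finset.card_biUnion_le
            _ ≤ ∑ u ∈ S.toFinset, 3 := by
                apply Finset.sum_le_sum
                intro u _
                have := hcubic u
                unfold degOn at this
                rw [Set.sep_univ, Set.sep_univ] at this
                rw [← Set.ncard_eq_toFinset_card']
                omega
            _ = 3 * S.ncard := by
                rw [Finset.sum_const, smul_eq_mul, mul_comm, Set.ncard_eq_toFinset_card']
  -- combine
  have hmain : 3 * 𝒪f.card ≤ 3 * S.ncard + 2 := by
    have h1 : ∑ C ∈ 𝒪f, 3 ≤ ∑ C ∈ 𝒪f, ((G.cross C \ {e₀} : Set E).ncard +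
        (if e₀ ∈ G.cross C then 1 else 0)) :=
      Finset.sum_le_sum (fun C hC => (hCfacts C hC).2)
    rw [Finset.sum_const, smul_eq_mul, mul_comm, Finset.sum_add_distrib] at h1
    omega
  have h𝒪card : 𝒪.ncard = 𝒪f.card := Set.ncard_eq_toFinset_card' _
  omega

end CrossCounting

end Multigraph

/-- Let `G` be a bridgeless cubic multigraph and `e` any edge of `G`. Then `G`
has a perfect matching that does not contain `e`. -/
theorem exists_perfect_matching_avoiding {V E : Type} [Fintype V] [Fintype E]
    (G : Multigraph V E)
    (hcubic : G.CubicOn Set.univ Set.univ)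
    (hbridgeless : G.BridgelessOn Set.univ Set.univ) (e : E) :
    ∃ M : Set E, G.IsPerfectMatchingOn Set.univ Set.univ M ∧ e ∉ M := by
  classical
  have hcond := G.tutte_condition_del (fun v => hcubic.2 v (Set.mem_univ v)) hbridgeless e
  obtain ⟨M, hM⟩ := Multigraph.tutte_aux (G := G) (F := Set.univ \ {e})
    (Set.univ : Set V).ncard Set.univ le_rfl (fun S hS => hcond S hS)
  refine ⟨M, ⟨fun g _ => Set.mem_univ g, hM.2.1, hM.2.2⟩, fun heM => ?_⟩
  exact ((hM.1 heM).1).2 rfl
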